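/- Let T^d=(N,E,d) be a tree diagram with n nodes, H = Σ_{i=1}^n ℂ x_i∂_{x_i}, and ℒ_1(T^d) = H + ℒ_0(T^d). Then: (1) ℒ_0(T^d) is a Lie ideal of ℒ_1(T^d); (2) ℒ_0(T^d) is a direct sum of one-dimensional root subspaces with respect to the adjoint action of H (i.e., it has a basis of vectors u for which there exists a nonzero linear functional α on H with [h,u]=α(h)u for all h∈H, distinct basis vectors having distinct roots); (3) every abelian ideal of ℒ_1(T^d) is a direct sum of some of these one-dimensional root subspaces of ℒ_0(T^d). -/

import Mathlib

attribute [local instance 100] LieRing.ofAssociativeRing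

noncomputable section

/-- The algebra of linear operators on polynomials in `n` variables (contains the
differential operators with polynomial coefficients). -/
abbrev DiffOp (n : ℕ) : Type := Module.End ℂ (MvPolynomial (Fin n) ℂ)

/-- The partial derivative operator `∂_{x_i}`. -/
noncomputable def pd {n : ℕ} (i : Fin n) : DiffOp n := (MvPolynomial.pderiv i).toLinearMap

/-- The operator of multiplication by `x_i`. -/
noncomputable def mX {n : ℕ} (i : Fin n) : DiffOp n := LinearMap.mulLeft ℂ (MvPolynomial.X i)

/-- The operator of multiplication by the monomial `∏ x_a ^ (j a)`. -/
noncomputable def mXpow {n : ℕ} (j : Fin n → ℕ) : DiffOp n :=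
  LinearMap.mulLeft ℂ (∏ a : Fin n, (MvPolynomial.X a) ^ (j a))

/-- A tree diagram on `n` nodes (nodes `0,…,n-1`, node `0` being the root): every node
`i ≠ 0` has a unique parent `parent i < i`, and the edge `(parent i, i)` carries a
positive integral weight `weight i`. -/
structure TreeDiagram (n : ℕ) [NeZero n] where
  parent : Fin n → Fin n
  parent_lt : ∀ i : Fin n, i ≠ 0 → parent i < i
  weight : Fin n → ℕ
  weight_pos : ∀ i : Fin n, i ≠ 0 → 0 < weight i

variable {n : ℕ} [NeZero n]

/-- The clan of a node: the set of nodes on the unique path from the root to `i`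
(including both ends). -/
def clanSet (T : TreeDiagram n) : Fin n → Finset (Fin n)
  | i => if h : i = 0 then {i} else insert i (clanSet T (T.parent i))
termination_by i => i.val
decreasing_by exact T.parent_lt i h

/-- The product of the weights of all edges along the path from the root to `i`. -/
def chainWt (T : TreeDiagram n) : Fin n → ℕ
  | i => if h : i = 0 then 1 else chainWt T (T.parent i) * T.weight i
termination_by i => i.val
decreasing_by exact T.parent_lt i h

/-- `j` is a descendant of `i`. -/
def Desc (T : TreeDiagram n) (i j : Fin n) : Prop := i ≠ j ∧ i ∈ clanSet T j

/-- A node is a tip if it has no children. -/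
def IsTip (T : TreeDiagram n) (i : Fin n) : Prop := ∀ j : Fin n, j ≠ 0 → T.parent j ≠ i

/-- Generators `∂_{x_1}` and `x_i^{d[(ι_i,ι_j)]} ∂_{x_j}` for edges `(ι_i,ι_j)`. -/
def upGens (T : TreeDiagram n) : Set (DiffOp n) :=
  {pd (0 : Fin n)} ∪ {A | ∃ j : Fin n, j ≠ 0 ∧ A = (mX (T.parent j)) ^ (T.weight j) * pd j}

/-- Generators `∂_{x_r}` for tips `ι_r` and `x_j^{d[(ι_i,ι_j)]} ∂_{x_i}` for edges. -/
def downGens (T : TreeDiagram n) : Set (DiffOp n) :=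
  {A | ∃ r : Fin n, IsTip T r ∧ A = pd r} ∪
    {A | ∃ j : Fin n, j ≠ 0 ∧ A = (mX j) ^ (T.weight j) * pd (T.parent j)}

/-- The upward nilpotent Lie algebra `L_0(T^d)`. -/
def upL0 (T : TreeDiagram n) : LieSubalgebra ℂ (DiffOp n) :=
  LieSubalgebra.lieSpan ℂ _ (upGens T)

/-- The downward nilpotent Lie algebra `ℒ_0(T^d)`. -/
def downL0 (T : TreeDiagram n) : LieSubalgebra ℂ (DiffOp n) :=
  LieSubalgebra.lieSpan ℂ _ (downGens T)

/-- The toral Cartan subalgebra `H = Σ ℂ x_i ∂_{x_i}`. -/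
def Hcart (n : ℕ) : Submodule ℂ (DiffOp n) :=
  Submodule.span ℂ (Set.range fun i : Fin n => mX i * pd i)

/-- `L_1(T^d) = H + L_0(T^d)`. -/
def upL1 (T : TreeDiagram n) : Submodule ℂ (DiffOp n) := Hcart n ⊔ (upL0 T).toSubmodule

/-- `ℒ_1(T^d) = H + ℒ_0(T^d)`. -/
def downL1 (T : TreeDiagram n) : Submodule ℂ (DiffOp n) := Hcart n ⊔ (downL0 T).toSubmodule

/-- `I` is an abelian (Lie) ideal of `L`. -/
def IsAbelianIdeal (L I : Submodule ℂ (DiffOp n)) : Prop :=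
  I ≤ L ∧ (∀ x ∈ L, ∀ y ∈ I, ⁅x, y⁆ ∈ I) ∧ ∀ x ∈ I, ∀ y ∈ I, ⁅x, y⁆ = (0 : DiffOp n)

/-- The lower central series: `lcs L k = G^{k+1}` in the paper's notation
(`G^1 = G`, `G^{i+1} = [G, G^i]`). -/
def lcs (L : LieSubalgebra ℂ (DiffOp n)) : ℕ → Submodule ℂ (DiffOp n)
  | 0 => L.toSubmodule
  | (k+1) => Submodule.span ℂ {z : DiffOp n | ∃ x ∈ L, ∃ y ∈ lcs L k, z = ⁅x, y⁆}

/-- Membership in `R_i`: exponent tuples supported on the strict ancestors of `i`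
(the clan of `i` with `i` removed) with `Σ_a j_a · d_1⋯d_{s(a)-1} ≤ d_1⋯d_{r-1}`. -/
def memR (T : TreeDiagram n) (i : Fin n) (j : Fin n → ℕ) : Prop :=
  (∀ a : Fin n, a ∉ (clanSet T i).erase i → j a = 0) ∧
    ∑ a ∈ (clanSet T i).erase i, j a * chainWt T a ≤ chainWt T i

/-- `ℓ_i`: the number of exponent tuples in `R_i`. -/
def ellCard (T : TreeDiagram n) (i : Fin n) : ℕ := Nat.card {j : Fin n → ℕ // memR T i j}

/-- A node is multiplicity-free if the edge to its parent has weight 1. -/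
def MultFree (T : TreeDiagram n) (i : Fin n) : Prop := i ≠ 0 ∧ T.weight i = 1

/-- `Υ`: the set of nodes all of whose descendants are multiplicity-free. -/
def Upsilon (T : TreeDiagram n) : Set (Fin n) := {i | ∀ j : Fin n, Desc T i j → MultFree T j}

/-- A set of nodes is independent if no element is a descendant of another. -/
def IndepSet (T : TreeDiagram n) (S : Set (Fin n)) : Prop :=
  ∀ a ∈ S, ∀ b ∈ S, ¬ Desc T a b

/-- The ideal `I(S) = Span{x^{j⃗}∂_{x_i}, x^{j⃗}∂_{x_s} : ι_i ∈ S, j⃗ ∈ R_i, ι_s ∈ D_i}`. -/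
def upIdealS (T : TreeDiagram n) (S : Set (Fin n)) : Submodule ℂ (DiffOp n) :=
  Submodule.span ℂ
    {A : DiffOp n | ∃ i ∈ S, ∃ j : Fin n → ℕ, memR T i j ∧
      ∃ s : Fin n, (s = i ∨ Desc T i s) ∧ A = mXpow j * pd s}

/-- The partial order `⪯` on `R_i`. -/
def Rle (T : TreeDiagram n) (i : Fin n) (j l : Fin n → ℕ) : Prop :=
  ∀ b ∈ (clanSet T i).erase i,
    ∑ a ∈ ((clanSet T i).erase i).filter (fun a => b ∈ clanSet T a),
        j a * (chainWt T a / chainWt T b) ≤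
      ∑ a ∈ ((clanSet T i).erase i).filter (fun a => b ∈ clanSet T a),
        l a * (chainWt T a / chainWt T b)

/-- `W = S ∪ ⋃_{ι_i ∈ S} D_i`. -/
def Wset (T : TreeDiagram n) (S : Set (Fin n)) : Set (Fin n) :=
  {r | ∃ i ∈ S, r = i ∨ Desc T i r}

/-- An admissible pair for abelian ideals of `L_1(T^d)`. -/
structure UpAdmiss (n : ℕ) [NeZero n] (T : TreeDiagram n) where
  S : Set (Fin n)
  K : Fin n → Set (Fin n → ℕ)
  S_ne : S.Nonempty
  S_sub : S ⊆ Upsilon T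
  S_indep : IndepSet T S
  K_out : ∀ r : Fin n, r ∉ Wset T S → K r = ∅
  K_mem : ∀ i ∈ S, ∀ r : Fin n, (r = i ∨ Desc T i r) → ∀ j ∈ K r, memR T i j
  K_indep : ∀ i ∈ S, ∀ r : Fin n, (r = i ∨ Desc T i r) →
    ∀ j ∈ K r, ∀ l ∈ K r, Rle T i j l → Rle T i l j
  K_ne : ∀ i ∈ S, (K i).Nonempty
  K_chain : ∀ i ∈ S, ∀ r : Fin n, (r = i ∨ Desc T i r) → ∀ s : Fin n, Desc T r s →
    ∀ j ∈ K r, ∀ l ∈ K s, ¬ (Rle T i l j ∧ ¬ Rle T i j l)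

/-- The abelian ideal `I[S,{K_r}] = Σ_{ι_s∈W} Σ_{j⃗∈K_s} I[s,j⃗]`. -/
def upAdIdeal (T : TreeDiagram n) (P : UpAdmiss n T) : Submodule ℂ (DiffOp n) :=
  Submodule.span ℂ
    {A : DiffOp n | ∃ i ∈ P.S, ∃ s : Fin n, (s = i ∨ Desc T i s) ∧ ∃ j ∈ P.K s,
      ∃ l : Fin n → ℕ, memR T i l ∧ Rle T i l j ∧
        ∃ r : Fin n, (r = s ∨ Desc T s r) ∧ A = mXpow l * pd r}

instance (T : TreeDiagram n) (i : Fin n) : Decidable (IsTip T i) :=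
  decidable_of_iff (∀ j : Fin n, j ≠ 0 → T.parent j ≠ i) Iff.rfl

instance (T : TreeDiagram n) (i j : Fin n) : Decidable (Desc T i j) :=
  decidable_of_iff (i ≠ j ∧ i ∈ clanSet T j) Iff.rfl

/-- `D_i` as a finset. -/
def Dfin (T : TreeDiagram n) (i : Fin n) : Finset (Fin n) :=
  Finset.univ.filter fun j => Desc T i j

/-- `κ_i`: the product of the weights of all edges inside `F_i = {ι_i} ∪ D_i`. -/
def kappa (T : TreeDiagram n) (i : Fin n) : ℕ := ∏ j ∈ Dfin T i, T.weight j

/-- The product of the weights of the edges on the path from `i` to a descendant `j`: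
`∏_{e ∈ E_{i,j}} d(e)`. -/
def pathWt (T : TreeDiagram n) (i j : Fin n) : ℕ :=
  ∏ a ∈ (clanSet T j) \ (clanSet T i), T.weight a

/-- `κ_{i,j} = κ_i / ∏_{e ∈ E_{i,j}} d(e)`. -/
def kappaIS (T : TreeDiagram n) (i j : Fin n) : ℕ := kappa T i / pathWt T i j

/-- Membership in `ℜ_i`: tuples supported on `D_i` with `Σ_s j_s κ_{i,s} ≤ κ_i`. -/
def memcR (T : TreeDiagram n) (i : Fin n) (j : Fin n → ℕ) : Prop :=
  (∀ a : Fin n, ¬ Desc T i a → j a = 0) ∧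
    ∑ a ∈ Dfin T i, j a * kappaIS T i a ≤ kappa T i

/-- The partial order `⪯` on `ℜ_i`. -/
def cRle (T : TreeDiagram n) (i : Fin n) (j l : Fin n → ℕ) : Prop :=
  ∀ m : Fin n, Desc T i m →
    ∑ r ∈ (clanSet T (T.parent m)) \ (clanSet T i), j r * pathWt T r (T.parent m) ≤
      ∑ r ∈ (clanSet T (T.parent m)) \ (clanSet T i), l r * pathWt T r (T.parent m)

/-- `Φ = {ι_1} ∪ {ι_i : all edges inside the clan of `ι_i` have weight 1}`. -/
def PhiSet (T : TreeDiagram n) : Set (Fin n) :=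
  {i | ∀ a ∈ clanSet T i, a ≠ 0 → T.weight a = 1}

/-- `Ω`: the set of children of the root. -/
def OmegaSet (T : TreeDiagram n) : Set (Fin n) := {i | i ≠ 0 ∧ T.parent i = 0}

/-- The ideal `𝓘(S) = Span{x^{j⃗}∂_{x_s} : ι_i ∈ S, j⃗ ∈ ℜ_i, ι_s ∈ C_i}`. -/
def downIdealS (T : TreeDiagram n) (S : Set (Fin n)) : Submodule ℂ (DiffOp n) :=
  Submodule.span ℂ
    {A : DiffOp n | ∃ i ∈ S, ∃ j : Fin n → ℕ, memcR T i j ∧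
      ∃ s ∈ clanSet T i, A = mXpow j * pd s}

/-- An admissible pair for abelian ideals of `ℒ_1(T^d)`. -/
structure DownAdmiss (n : ℕ) [NeZero n] (T : TreeDiagram n) where
  S : Set (Fin n)
  K : Fin n → Fin n → Set (Fin n → ℕ)
  S_ne : S.Nonempty
  S_sub : S ⊆ PhiSet T
  S_indep : IndepSet T S
  K_out : ∀ i r : Fin n, (i ∉ S ∨ r ∉ clanSet T i) → K i r = ∅
  K_mem : ∀ i ∈ S, ∀ r ∈ clanSet T i, ∀ j ∈ K i r, memcR T i j
  K_indep : ∀ i ∈ S, ∀ r ∈ clanSet T i, ∀ j ∈ K i r, ∀ l ∈ K i r,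
    cRle T i j l → cRle T i l j
  K_ne : ∀ i ∈ S, (K i i).Nonempty
  K_cond : ∀ i ∈ S, ∀ s ∈ clanSet T i, ∀ r ∈ clanSet T s, r ≠ s →
    ∀ j ∈ K i r, ∀ l ∈ K i s, ¬ (cRle T i j l ∧ ¬ cRle T i l j)

/-- The abelian ideal `𝓘[S,{𝒦_r}] = Σ_{ι_s∈W} Σ_{j⃗∈𝒦_s} 𝓘[s,j⃗]`. -/
def downAdIdeal (T : TreeDiagram n) (P : DownAdmiss n T) : Submodule ℂ (DiffOp n) :=
  Submodule.span ℂ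
    {A : DiffOp n | ∃ i ∈ P.S, ∃ s ∈ clanSet T i, ∃ j ∈ P.K i s,
      ∃ l : Fin n → ℕ, memcR T s l ∧ cRle T s l j ∧
        ∃ r ∈ clanSet T s, A = mXpow l * pd r}

end

noncomputable section

/-- `A` acts locally nilpotently at `p`. -/
def LocNilpOn {M : Type} [AddCommGroup M] [Module ℂ M] (A : Module.End ℂ M) (p : M) : Prop :=
  ∃ N : ℕ, ∀ k : ℕ, N ≤ k → (A ^ k) p = 0

open scoped Classical in
/-- `e^A(p) = Σ_k A^k(p)/k!`, a finite sum when `A` acts locally nilpotently at `p`. -/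
noncomputable def expApply {M : Type} [AddCommGroup M] [Module ℂ M]
    (A : Module.End ℂ M) (p : M) : M :=
  if h : LocNilpOn A p then
    ∑ k ∈ Finset.range h.choose, ((k.factorial : ℂ))⁻¹ • (A ^ k) p
  else 0

open scoped Classical in
/-- `θ(A)(q) = Σ_{i≥1} ((−1)^{i−1}/i!) A^{i−1}(q)` where `θ(x) = (1−e^{−x})/x`. -/
noncomputable def thetaApply {M : Type} [AddCommGroup M] [Module ℂ M]
    (A : Module.End ℂ M) (q : M) : M :=
  if h : LocNilpOn A q then
    ∑ k ∈ Finset.range h.choose, ((-1 : ℂ) ^ k * (((k + 1).factorial : ℂ))⁻¹) • (A ^ k) q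
  else 0

abbrev DiffOp' (n : ℕ) : Type := Module.End ℂ (MvPolynomial (Fin n) ℂ)

noncomputable def pd' {n : ℕ} (i : Fin n) : DiffOp' n := (MvPolynomial.pderiv i).toLinearMap
noncomputable def mX' {n : ℕ} (i : Fin n) : DiffOp' n := LinearMap.mulLeft ℂ (MvPolynomial.X i)

/-- `D_i = t(∂_{x_1} + Σ_{r=1}^{i-1} x_r^{m_r} ∂_{x_{r+1}})` (0-based indices). -/
noncomputable def DchainOp (n : ℕ) (hn : 0 < n) (m : ℕ → ℕ) (t : ℂ) (i : ℕ) : DiffOp' n :=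
  t • (pd' (⟨0, hn⟩ : Fin n) +
    ∑ k ∈ Finset.univ.filter (fun k : Fin n => 0 < k.val ∧ k.val < i),
      (mX' (⟨k.val - 1, lt_of_le_of_lt (Nat.sub_le _ _) k.isLt⟩ : Fin n)) ^ (m k.val) * pd' k)

/-- `η_{j+1}` of the chain: `η_1(t) = t`, `η_{j+2}(t) = ∫_0^t (x_{j+1} + η_{j+1}(y))^{m_{j+1}} dy`. -/
noncomputable def etaChain (m : ℕ → ℕ) (x : ℕ → ℝ) : ℕ → ℝ → ℝ
  | 0 => fun t => t
  | (j+1) => fun t => ∫ y in (0:ℝ)..t, (x j + etaChain m x j y) ^ (m (j+1))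

/-- `ξ̃_{n-k}` of the chain (reversed indexing):
`ξ̃_n(t) = t w_n^{m_n}`, `ξ̃_i(t) = ∫_0^t (w_i + ξ̃_{i+1}(y))^{m_i} dy`. -/
noncomputable def xiRev (n : ℕ) (m : ℕ → ℕ) (w : ℕ → ℂ) : ℕ → ℝ → ℂ
  | 0 => fun t => (t : ℂ) * (w (n-1)) ^ (m n)
  | (k+1) => fun t => ∫ y in (0:ℝ)..t, (w (n-k-2) + xiRev n m w k y) ^ (m (n-k-1))

/-- Formal antiderivative `∫_0^t` of a polynomial. -/
noncomputable def polyInt (p : Polynomial ℂ) : Polynomial ℂ :=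
  p.sum fun k a => Polynomial.C (a / (k + 1)) * Polynomial.X ^ (k + 1)

/-- Coefficient-wise antiderivative of a polynomial in the commuting symbols `∂_{x_i}`
with coefficients polynomial in `t`. -/
noncomputable def mvPolyInt {n : ℕ} (q : MvPolynomial (Fin n) (Polynomial ℂ)) :
    MvPolynomial (Fin n) (Polynomial ℂ) :=
  ∑ d ∈ q.support, MvPolynomial.monomial d (polyInt (q.coeff d))

/-- Interpretation of a commutative polynomial in the symbols `∂_{x_i}` as a
constant-coefficient differential operator. -/
noncomputable def opOfDeriv {n : ℕ} (P : MvPolynomial (Fin n) ℂ) : DiffOp' n :=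
  ∑ d ∈ P.support, P.coeff d • ((List.finRange n).map fun a => pd' a ^ d a).prod

/-- `(Σ a_k x^k)` coefficients of the Campbell–Hausdorff formula. -/
noncomputable def aCH : ℕ → ℚ
  | 0 => 1
  | (k+1) => ∑ mm ∈ Finset.Icc 1 (k+2), ((-1 : ℚ)) ^ (mm - 1) / mm *
      ∑ p ∈ Finset.Nat.antidiagonalTuple mm (k + 2 - mm),
        ((∏ i : Fin mm, (if i.val = mm - 1 then (p i).factorial
          else ((p i) + 1).factorial : ℕ) : ℕ) : ℚ)⁻¹

end

noncomputable section
variable {n : ℕ} [NeZero n]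

/-- `η_i(t)` for a tree: `η_1(t) = t`,
`η_i(t) = ∫_0^t (x_{p(i)} + η_{p(i)}(y))^{d[(ι_{p(i)},ι_i)]} dy`. -/
noncomputable def etaTree (T : TreeDiagram n) (x : Fin n → ℝ) : Fin n → ℝ → ℝ
  | i => if h : i = 0 then fun t => t
      else fun t => ∫ y in (0:ℝ)..t, (x (T.parent i) + etaTree T x (T.parent i) y) ^ (T.weight i)
termination_by i => i.val
decreasing_by exact T.parent_lt i h

/-- The children of a node. -/
def childFinset (T : TreeDiagram n) (i : Fin n) : Finset (Fin n) :=
  Finset.univ.filter fun s : Fin n => s ≠ 0 ∧ T.parent s = i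

/-- `ξ̃_i(t)` as a polynomial in the commuting symbols `∂_{x_j}` (the variables of the
`MvPolynomial`) with coefficients polynomial in `t`:
`ξ̃_r(t) = t ∂_{x_r}^{m_r}` for tips, and
`ξ̃_i(t) = ∫_0^t (∂_{x_i} + Σ_{ι_s∈Θ_i} ξ̃_s(y))^{m_i} dy` otherwise. -/
noncomputable def xiTree (T : TreeDiagram n) (m : Fin n → ℕ) :
    Fin n → MvPolynomial (Fin n) (Polynomial ℂ)
  | i =>
    if IsTip T i then MvPolynomial.C Polynomial.X * (MvPolynomial.X i) ^ (m i)
    else mvPolyInt ((MvPolynomial.X i +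
      ∑ s ∈ (childFinset T i).attach, xiTree T m s.1) ^ (m i))
termination_by i => n - i.val
decreasing_by
  have hs := s.2
  simp only [childFinset, Finset.mem_filter, Finset.mem_univ, true_and] at hs
  have h1 : T.parent s.1 < s.1 := T.parent_lt s.1 hs.1
  rw [hs.2] at h1
  have h2 := s.1.isLt
  have h3 : i.val < s.1.val := h1
  omega

/-- The operator `ξ_i`: `ξ_1 = ξ̃_1(t)` and `ξ_i = x_{p(i)}·ξ̃_i(t)` for `i ≥ 2`. -/
noncomputable def xiFull (T : TreeDiagram n) (m : Fin n → ℕ) (t : ℂ) (i : Fin n) : DiffOp n :=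
  if i = 0 then opOfDeriv ((xiTree T m i).map (Polynomial.evalRingHom t))
  else mX (T.parent i) * opOfDeriv ((xiTree T m i).map (Polynomial.evalRingHom t))

/-- `D = ∂_{x_1}^{m_1} + Σ_{(ι_i,ι_j)∈E} x_i ∂_{x_j}^{m_j}`. -/
noncomputable def Dtree (T : TreeDiagram n) (m : Fin n → ℕ) : DiffOp n :=
  pd (0 : Fin n) ^ (m 0) +
    ∑ j ∈ Finset.univ.filter (fun j : Fin n => j ≠ 0), mX (T.parent j) * pd j ^ (m j)

/-- The chain tree `T_{A_n}` with all weights `1`. -/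
def chainTree (n : ℕ) [NeZero n] : TreeDiagram n where
  parent := fun i => ⟨i.val - 1, lt_of_le_of_lt (Nat.sub_le _ _) i.isLt⟩
  parent_lt := by
    intro i hi
    have h0 : i.val ≠ 0 := by
      intro h; exact hi (Fin.ext (by simpa using h))
    simp only [Fin.lt_def]
    omega
  weight := fun _ => 1
  weight_pos := fun _ _ => one_pos

end

noncomputable section Aux
open MvPolynomial

variable {n : ℕ} [NeZero n]

local notation "𝓟" => MvPolynomial (Fin n) ℂ

def toF (j : Fin n → ℕ) : Fin n →₀ ℕ := Finsupp.equivFunOnFinite.symm j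

@[simp] lemma toF_apply (j : Fin n → ℕ) (a : Fin n) : toF j a = j a := rfl

lemma toF_inj : Function.Injective (toF (n := n)) :=
  Finsupp.equivFunOnFinite.symm.injective

lemma prod_X_pow (j : Fin n → ℕ) :
    (∏ a : Fin n, (X a : 𝓟) ^ (j a)) = monomial (toF j) 1 := by
  rw [← MvPolynomial.prod_X_pow_eq_monomial]
  refine (Finset.prod_subset (Finset.subset_univ _) ?_).symm
  intro x _ hx
  have h : toF j x = 0 := by simpa [Finsupp.mem_support_iff] using hx
  simp only [toF_apply] at h ⊢
  simp [h]

lemma mXpow_eq (j : Fin n → ℕ) :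
    mXpow j = LinearMap.mulLeft ℂ ((monomial (toF j) (1:ℂ)) : 𝓟) := by
  rw [mXpow, _root_.prod_X_pow]

@[simp] lemma pd_apply (i : Fin n) (p : 𝓟) : pd i p = pderiv i p := rfl

lemma pderiv_comm' (i j : Fin n) (p : 𝓟) :
    pderiv i (pderiv j p) = pderiv j (pderiv i p) := by
  induction p using MvPolynomial.induction_on' with
  | add p q hp hq => simp [map_add, hp, hq]
  | monomial s a =>
    rcases eq_or_ne i j with rfl | hij
    · rfl
    · have e3 : s - Finsupp.single j 1 - Finsupp.single i 1
          = s - Finsupp.single i 1 - Finsupp.single j 1 := by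
        rw [tsub_tsub, tsub_tsub, add_comm]
      simp only [pderiv_monomial, Finsupp.tsub_apply, Finsupp.single_apply,
        if_neg hij, if_neg (Ne.symm hij), e3, Nat.sub_zero]
      congr 1
      ring

lemma pd_comm (i j : Fin n) : (pd i : DiffOp n) * pd j = pd j * pd i := by
  apply LinearMap.ext; intro p
  exact pderiv_comm' i j p

lemma pd_mulLeft (i : Fin n) (q : 𝓟) :
    (pd i : DiffOp n) * LinearMap.mulLeft ℂ q
      = LinearMap.mulLeft ℂ (pderiv i q) + LinearMap.mulLeft ℂ q * pd i := by
  apply LinearMap.ext; intro p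
  simp only [Module.End.mul_apply, LinearMap.add_apply, LinearMap.mulLeft_apply, pd_apply,
    pderiv_mul]
  try ring

lemma mulLeft_smul' (c : ℂ) (q : 𝓟) :
    LinearMap.mulLeft ℂ (c • q) = c • LinearMap.mulLeft ℂ q := by
  apply LinearMap.ext; intro p
  simp [smul_mul_assoc]

/-- The monomial operator `x^j ∂_s`. -/
def MonOp (p : (Fin n → ℕ) × Fin n) : DiffOp n := mXpow p.1 * pd p.2

lemma monop_mul (a b : Fin n → ℕ) (i j : Fin n) :
    MonOp (a,i) * MonOp (b,j) =
      LinearMap.mulLeft ℂ ((monomial (toF a) (1:ℂ)) * pderiv i (monomial (toF b) 1)) * pd j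
        + LinearMap.mulLeft ℂ ((monomial (toF a) (1:ℂ)) * (monomial (toF b) 1))
            * ((pd i : DiffOp n) * pd j) := by
  simp only [MonOp, mXpow_eq]
  have h1 : LinearMap.mulLeft ℂ ((monomial (toF a) (1:ℂ))) * pd i
        * (LinearMap.mulLeft ℂ ((monomial (toF b) (1:ℂ))) * pd j)
      = LinearMap.mulLeft ℂ ((monomial (toF a) (1:ℂ)))
        * ((pd i : DiffOp n) * LinearMap.mulLeft ℂ ((monomial (toF b) (1:ℂ)))) * pd j := by
    noncomm_ring
  rw [h1, pd_mulLeft, mul_add, add_mul]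
  refine congrArg₂ (· + ·) ?_ ?_
  · rw [LinearMap.mulLeft_mul, ← Module.End.mul_eq_comp]
  · rw [LinearMap.mulLeft_mul, ← Module.End.mul_eq_comp]
    noncomm_ring

lemma exp_eq (a b : Fin n → ℕ) (i : Fin n) (h : b i ≠ 0) :
    toF a + (toF b - Finsupp.single i 1)
      = toF (fun x => a x + b x - if x = i then 1 else 0) := by
  ext x
  simp only [Finsupp.add_apply, Finsupp.tsub_apply, Finsupp.single_apply, toF_apply]
  by_cases hx : x = i
  · subst hx; simp; omega
  · simp [hx, Ne.symm hx]

lemma term_eq (a b : Fin n → ℕ) (i j : Fin n) :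
    LinearMap.mulLeft ℂ ((monomial (toF a) (1:ℂ)) * pderiv i (monomial (toF b) 1)) * pd j
      = (b i : ℂ) • MonOp (fun x => a x + b x - if x = i then 1 else 0, j) := by
  rw [pderiv_monomial, one_mul]
  rcases eq_or_ne (b i) 0 with h | h
  · have : ((toF b) i : ℂ) = 0 := by simp [h]
    rw [this]
    simp [h]
  · have h1 : (monomial (toF a) (1:ℂ)) * monomial (toF b - Finsupp.single i 1) (((toF b) i : ℂ))
        = (b i : ℂ) • monomial (toF (fun x => a x + b x - if x = i then 1 else 0)) 1 := by
      rw [monomial_mul, one_mul, exp_eq a b i h]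
      rw [← (monomial _).map_smul]
      simp
    rw [h1, mulLeft_smul', smul_mul_assoc, MonOp, mXpow_eq]

/-- The fundamental bracket formula for monomial operators. -/
lemma monop_bracket (a b : Fin n → ℕ) (i j : Fin n) :
    ⁅MonOp (a,i), MonOp (b,j)⁆
      = (b i : ℂ) • MonOp (fun x => a x + b x - if x = i then 1 else 0, j)
        - (a j : ℂ) • MonOp (fun x => a x + b x - if x = j then 1 else 0, i) := by
  rw [Ring.lie_def, monop_mul, monop_mul, term_eq, term_eq]
  have hc : (monomial (toF b) (1:ℂ)) * monomial (toF a) 1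
      = (monomial (toF a) (1:ℂ)) * monomial (toF b) 1 := mul_comm _ _
  rw [hc, pd_comm j i]
  have h3 : (fun x => b x + a x - if x = j then 1 else 0)
      = (fun x => a x + b x - if x = j then 1 else 0) := by
    funext x; rw [add_comm (b x)]
  rw [h3]
  abel

end Aux
noncomputable section Aux2
open MvPolynomial

variable {n : ℕ} [NeZero n]

lemma clan_zero (T : TreeDiagram n) : clanSet T 0 = {(0 : Fin n)} := by
  rw [clanSet]; simp

lemma clan_succ (T : TreeDiagram n) (i : Fin n) (h : i ≠ 0) :
    clanSet T i = insert i (clanSet T (T.parent i)) := by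
  rw [clanSet]; simp [h]

lemma self_mem_clan (T : TreeDiagram n) (i : Fin n) : i ∈ clanSet T i := by
  by_cases h : i = 0
  · subst h; rw [clan_zero]; exact Finset.mem_singleton_self _
  · rw [clan_succ T i h]; exact Finset.mem_insert_self _ _

theorem clan_le (T : TreeDiagram n) : ∀ (a : Fin n), ∀ i ∈ clanSet T a, i ≤ a
  | a => by
    intro i hi
    by_cases h : a = 0
    · subst h; rw [clan_zero] at hi
      simp only [Finset.mem_singleton] at hi
      exact le_of_eq hi
    · rw [clan_succ T a h] at hi
      rcases Finset.mem_insert.1 hi with rfl | hi'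
      · exact le_refl _
      · exact le_trans (clan_le T (T.parent a) i hi') (le_of_lt (T.parent_lt a h))
termination_by a => a.val
decreasing_by exact T.parent_lt a h

theorem clan_sub (T : TreeDiagram n) : ∀ (a : Fin n), ∀ i ∈ clanSet T a,
    clanSet T i ⊆ clanSet T a
  | a => by
    intro i hi
    by_cases h : a = 0
    · subst h; rw [clan_zero] at hi
      simp only [Finset.mem_singleton] at hi
      subst hi; exact subset_rfl
    · rw [clan_succ T a h] at hi
      rcases Finset.mem_insert.1 hi with rfl | hi'
      · exact subset_rfl
      · rw [clan_succ T a h]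
        exact subset_trans (clan_sub T (T.parent a) i hi') (Finset.subset_insert _ _)
termination_by a => a.val
decreasing_by exact T.parent_lt a h

lemma desc_trans (T : TreeDiagram n) {i j k : Fin n}
    (h1 : Desc T i j) (h2 : Desc T j k) : Desc T i k := by
  refine ⟨?_, clan_sub T k j h2.2 h1.2⟩
  rintro rfl
  exact h1.1 (le_antisymm (clan_le T j i h1.2) (clan_le T i j h2.2))

lemma parent_desc (T : TreeDiagram n) {j : Fin n} (h : j ≠ 0) : Desc T (T.parent j) j :=
  ⟨ne_of_lt (T.parent_lt j h), by
    rw [clan_succ T j h]; exact Finset.mem_insert_of_mem (self_mem_clan T _)⟩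

lemma mXpow_single (j : Fin n) (w : ℕ) :
    mXpow (fun x => if x = j then w else 0)
      = LinearMap.mulLeft ℂ ((X j : MvPolynomial (Fin n) ℂ) ^ w) := by
  rw [mXpow]
  congr 1
  rw [show (∏ a : Fin n, (X a : MvPolynomial (Fin n) ℂ) ^ (if a = j then w else 0))
      = ∏ a : Fin n, (if a = j then (X a : MvPolynomial (Fin n) ℂ) ^ w else 1) from
    Finset.prod_congr rfl (by intro x _; split <;> simp)]
  rw [Finset.prod_ite_eq' Finset.univ j (fun a => (X a : MvPolynomial (Fin n) ℂ) ^ w)]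
  simp

lemma mX_pow_pd (j : Fin n) (w : ℕ) (i : Fin n) :
    (mX j) ^ w * pd i = MonOp (fun x => if x = j then w else 0, i) := by
  rw [MonOp, mXpow_single, mX, LinearMap.pow_mulLeft]

lemma pd_eq_monop (r : Fin n) : pd r = MonOp ((fun _ => 0 : Fin n → ℕ), r) := by
  rw [MonOp, mXpow]
  simp [LinearMap.mulLeft_one, ← Module.End.one_eq_id]

lemma mX_pd (i : Fin n) :
    mX i * pd i = MonOp ((fun x => if x = i then 1 else 0 : Fin n → ℕ), i) := by
  have := mX_pow_pd i 1 i
  rwa [pow_one] at this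

/-- bracket of a Cartan generator with a monomial operator. -/
lemma adH_mon (i : Fin n) (b : Fin n → ℕ) (j : Fin n) :
    ⁅mX i * pd i, MonOp (b, j)⁆
      = (((b i : ℂ)) - if i = j then 1 else 0) • MonOp (b, j) := by
  rw [mX_pd, monop_bracket]
  have he1 : (fun x => (if x = i then 1 else 0) + b x - if x = i then 1 else 0) = b := by
    funext x; by_cases hx : x = i <;> simp [hx]
  rw [he1]
  by_cases hij : i = j
  · subst hij
    have he2 : (fun x => (if x = i then 1 else 0) + b x - if x = i then 1 else 0) = b := he1
    rw [he2]
    have h1 : ((if i = i then 1 else 0 : ℕ) : ℂ) = 1 := by simp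
    have h2 : (if i = i then (1:ℂ) else 0) = 1 := by simp
    rw [h1, h2]
    module
  · have : ((if j = i then 1 else 0 : ℕ) : ℂ) = 0 := by simp [Ne.symm hij]
    rw [this]
    simp [hij]

/-- The predicate: exponents supported on strict descendants of the derivative index. -/
def GoodP (T : TreeDiagram n) (p : (Fin n → ℕ) × Fin n) : Prop :=
  ∀ a : Fin n, p.1 a ≠ 0 → Desc T p.2 a

def WTset (T : TreeDiagram n) : Set (DiffOp n) := MonOp '' {p | GoodP T p}

def WT (T : TreeDiagram n) : Submodule ℂ (DiffOp n) := Submodule.span ℂ (WTset T)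

lemma wt_bracket {T : TreeDiagram n} {p q : (Fin n → ℕ) × Fin n}
    (hp : GoodP T p) (hq : GoodP T q) : ⁅MonOp p, MonOp q⁆ ∈ WT T := by
  obtain ⟨a, i⟩ := p; obtain ⟨b, j⟩ := q
  rw [monop_bracket]
  apply sub_mem
  · rcases eq_or_ne (b i) 0 with h | h
    · simp [h]
    · refine Submodule.smul_mem _ _ (Submodule.subset_span ⟨_, ?_, rfl⟩)
      intro x hx
      have hx' : a x + b x - (if x = i then 1 else 0) ≠ 0 := hx
      have hub : a x ≠ 0 ∨ b x ≠ 0 := by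
        by_contra hc
        push_neg at hc
        apply hx'
        rw [hc.1, hc.2]
        simp
      rcases hub with ha | hb
      · exact desc_trans T (hq i h) (hp x ha)
      · exact hq x hb
  · rcases eq_or_ne (a j) 0 with h | h
    · simp [h]
    · refine Submodule.smul_mem _ _ (Submodule.subset_span ⟨_, ?_, rfl⟩)
      intro x hx
      have hx' : a x + b x - (if x = j then 1 else 0) ≠ 0 := hx
      have hub : a x ≠ 0 ∨ b x ≠ 0 := by
        by_contra hc
        push_neg at hc
        apply hx'
        rw [hc.1, hc.2]
        simp
      rcases hub with ha | hb
      · exact hp x ha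
      · exact desc_trans T (hp j h) (hq x hb)

lemma WT_bracket_mem {T : TreeDiagram n} :
    ∀ x ∈ WT T, ∀ y ∈ WT T, ⁅x, y⁆ ∈ WT T := by
  intro x hx
  induction hx using Submodule.span_induction with
  | mem u hu =>
    intro y hy
    induction hy using Submodule.span_induction with
    | mem w hw =>
      obtain ⟨p, hp, rfl⟩ := hu
      obtain ⟨q, hq, rfl⟩ := hw
      exact wt_bracket hp hq
    | zero => simp
    | add y z _ _ h1 h2 => rw [lie_add]; exact add_mem h1 h2
    | smul c y _ h1 => rw [lie_smul]; exact Submodule.smul_mem _ _ h1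
  | zero => intro y hy; simp
  | add u w _ _ h1 h2 => intro y hy; rw [add_lie]; exact add_mem (h1 y hy) (h2 y hy)
  | smul c u _ h1 => intro y hy; rw [smul_lie]; exact Submodule.smul_mem _ _ (h1 y hy)

def WTLie (T : TreeDiagram n) : LieSubalgebra ℂ (DiffOp n) :=
  { WT T with
    lie_mem' := fun {x y} hx hy => WT_bracket_mem x hx y hy }

lemma downGens_sub_WT (T : TreeDiagram n) : downGens T ⊆ WTset T := by
  rintro A (⟨r, _, rfl⟩ | ⟨j, hj, rfl⟩)
  · exact ⟨((fun _ => 0 : Fin n → ℕ), r), fun a ha => absurd rfl ha, (pd_eq_monop r).symm⟩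
  · refine ⟨((fun x => if x = j then T.weight j else 0 : Fin n → ℕ), T.parent j), ?_,
      (mX_pow_pd j (T.weight j) (T.parent j)).symm⟩
    intro a ha
    by_cases hx : a = j
    · subst hx; exact parent_desc T hj
    · simp [hx] at ha

lemma downL0_le_WT (T : TreeDiagram n) : (downL0 T).toSubmodule ≤ WT T := by
  have h : downL0 T ≤ WTLie T := by
    rw [downL0, LieSubalgebra.lieSpan_le]
    exact fun x hx => Submodule.subset_span (downGens_sub_WT T hx)
  exact fun x hx => h hx

/-- Each downward generator is a monomial operator. -/
lemma gens_monop {T : TreeDiagram n} {g : DiffOp n} (hg : g ∈ downGens T) :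
    ∃ p : (Fin n → ℕ) × Fin n, g = MonOp p := by
  rcases hg with ⟨r, _, rfl⟩ | ⟨j, _, rfl⟩
  · exact ⟨_, pd_eq_monop r⟩
  · exact ⟨_, mX_pow_pd j (T.weight j) (T.parent j)⟩

lemma adH_downL0 (T : TreeDiagram n) (i : Fin n) :
    ∀ u ∈ downL0 T, ⁅mX i * pd i, u⁆ ∈ downL0 T := by
  set h : DiffOp n := mX i * pd i with hh
  let S : LieSubalgebra ℂ (DiffOp n) :=
    { carrier := {u | u ∈ downL0 T ∧ ⁅h, u⁆ ∈ downL0 T}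
      add_mem' := fun {x y} hx hy =>
        ⟨add_mem hx.1 hy.1, by rw [lie_add]; exact add_mem hx.2 hy.2⟩
      zero_mem' := ⟨zero_mem _, by simp⟩
      smul_mem' := fun c x hx =>
        ⟨Submodule.smul_mem _ _ hx.1, by rw [lie_smul]; exact Submodule.smul_mem _ _ hx.2⟩
      lie_mem' := fun {x y} hx hy =>
        ⟨(downL0 T).lie_mem hx.1 hy.1, by
          rw [leibniz_lie]
          exact add_mem ((downL0 T).lie_mem hx.2 hy.1) ((downL0 T).lie_mem hx.1 hy.2)⟩ }
  have hle : downL0 T ≤ S := by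
    rw [downL0, LieSubalgebra.lieSpan_le]
    intro g hg
    refine ⟨LieSubalgebra.subset_lieSpan hg, ?_⟩
    obtain ⟨⟨b, j⟩, rfl⟩ := gens_monop hg
    rw [hh, adH_mon]
    exact Submodule.smul_mem _ _ (LieSubalgebra.subset_lieSpan hg)
  exact fun u hu => (hle hu).2

end Aux2
noncomputable section Aux3
open MvPolynomial

variable {n : ℕ} [NeZero n]

lemma lie_smul'' (c : ℂ) (x y : DiffOp n) : ⁅x, c • y⁆ = c • ⁅x, y⁆ := by
  rw [Ring.lie_def, Ring.lie_def, mul_smul_comm, smul_mul_assoc, smul_sub]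

lemma smul_lie'' (c : ℂ) (x y : DiffOp n) : ⁅c • x, y⁆ = c • ⁅x, y⁆ := by
  rw [Ring.lie_def, Ring.lie_def, mul_smul_comm, smul_mul_assoc, smul_sub]

lemma lie_sum' (x : DiffOp n) {σ : Type*} (s : Finset σ) (f : σ → DiffOp n) :
    ⁅x, ∑ k ∈ s, f k⁆ = ∑ k ∈ s, ⁅x, f k⁆ := by
  classical
  induction s using Finset.induction_on with
  | empty => simp
  | @insert a t ha ih => rw [Finset.sum_insert ha, Finset.sum_insert ha, lie_add, ih]

lemma sum_lie' {σ : Type*} (s : Finset σ) (f : σ → DiffOp n) (y : DiffOp n) :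
    ⁅∑ k ∈ s, f k, y⁆ = ∑ k ∈ s, ⁅f k, y⁆ := by
  classical
  induction s using Finset.induction_on with
  | empty => simp
  | @insert a t ha ih => rw [Finset.sum_insert ha, Finset.sum_insert ha, add_lie, ih]

lemma monop_apply (p : (Fin n → ℕ) × Fin n) (q : MvPolynomial (Fin n) ℂ) :
    MonOp p q = (monomial (toF p.1) 1) * pderiv p.2 q := by
  rw [MonOp, mXpow_eq]
  simp [Module.End.mul_apply]

lemma monop_X (p : (Fin n → ℕ) × Fin n) (s : Fin n) :
    MonOp p (X s) = if p.2 = s then (monomial (toF p.1) 1) else 0 := by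
  rw [monop_apply, pderiv_X]
  rcases eq_or_ne p.2 s with h | h
  · simp [h, Pi.single_apply]
  · simp [h, Pi.single_apply, Ne.symm h]

lemma monop_ne_zero (p : (Fin n → ℕ) × Fin n) : MonOp p ≠ 0 := by
  intro h
  have h1 : MonOp p (X p.2) = 0 := by rw [h]; rfl
  rw [monop_X, if_pos rfl] at h1
  have h2 := congrArg (coeff (toF p.1)) h1
  simp [coeff_monomial] at h2

lemma monop_li : LinearIndependent ℂ (MonOp : (Fin n → ℕ) × Fin n → DiffOp n) := by
  classical
  rw [linearIndependent_iff]
  intro l hl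
  ext p0
  obtain ⟨j0, s0⟩ := p0
  have happ : coeff (toF j0) ((Finsupp.linearCombination ℂ MonOp l) (X s0)) = 0 := by
    rw [hl]; simp
  rw [Finsupp.linearCombination_apply, Finsupp.sum, LinearMap.coe_sum, Finset.sum_apply,
    coeff_sum] at happ
  have hterm : ∀ p ∈ l.support,
      coeff (toF j0) ((l p • MonOp p) (X s0)) = if p = (j0, s0) then l p else 0 := by
    intro p _
    rw [LinearMap.smul_apply, coeff_smul, monop_X]
    rcases eq_or_ne p (j0, s0) with rfl | hne
    · simp [coeff_monomial]
    · have hcase : ¬(p.2 = s0 ∧ toF p.1 = toF j0) := by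
        rintro ⟨h2, h1⟩
        exact hne (Prod.ext (toF_inj h1) h2)
      by_cases h2 : p.2 = s0
      · have h1 : toF p.1 ≠ toF j0 := fun h1 => hcase ⟨h2, h1⟩
        simp [h2, coeff_monomial, h1, hne]
      · simp [h2, hne]
  rw [Finset.sum_congr rfl hterm, Finset.sum_ite_eq' l.support (j0, s0) l] at happ
  by_cases hmem : (j0, s0) ∈ l.support
  · rw [if_pos hmem] at happ; exact happ
  · exact Finsupp.notMem_support_iff.1 hmem

lemma monop_inj : Function.Injective (MonOp : (Fin n → ℕ) × Fin n → DiffOp n) :=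
  monop_li.injective

/-- Vandermonde-style extraction of eigencomponents. -/
lemma extract_weights (U : Submodule ℂ (DiffOp n)) (A : DiffOp n)
    (hU : ∀ x ∈ U, ⁅A, x⁆ ∈ U) {σ : Type*} :
    ∀ (s : Finset σ) (y : σ → DiffOp n) (lam : σ → ℂ),
      Set.InjOn lam ↑s → (∀ k ∈ s, ⁅A, y k⁆ = lam k • y k) →
      (∑ k ∈ s, y k) ∈ U → ∀ k ∈ s, y k ∈ U := by
  classical
  intro s
  induction s using Finset.induction_on with
  | empty => intro y lam _ _ _ k hk; exact absurd hk (Finset.notMem_empty k)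
  | @insert a t ha ih =>
    intro y lam hinj heig hsum k hk
    have h1 : ⁅A, ∑ m ∈ insert a t, y m⁆ - lam a • ∑ m ∈ insert a t, y m
        = ∑ m ∈ t, (lam m - lam a) • y m := by
      rw [lie_sum', Finset.smul_sum, ← Finset.sum_sub_distrib]
      rw [Finset.sum_congr rfl (fun m hm =>
        show ⁅A, y m⁆ - lam a • y m = (lam m - lam a) • y m by rw [heig m hm]; module)]
      rw [Finset.sum_insert ha, sub_self, zero_smul, zero_add]
    have hz : (∑ m ∈ t, (lam m - lam a) • y m) ∈ U :=
      h1 ▸ sub_mem (hU _ hsum) (Submodule.smul_mem _ _ hsum)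
    have hyt : ∀ m ∈ t, y m ∈ U := by
      intro m hmt
      have hinj' : Set.InjOn lam ↑t :=
        hinj.mono (by exact_mod_cast Finset.subset_insert a t)
      have hcomp := ih (fun m => (lam m - lam a) • y m) lam hinj'
        (fun m hm => by
          show ⁅A, (lam m - lam a) • y m⁆ = lam m • ((lam m - lam a) • y m)
          have h2 : ⁅A, (lam m - lam a) • y m⁆ = (lam m - lam a) • ⁅A, y m⁆ :=
            lie_smul'' _ _ _
          rw [h2, heig m (Finset.mem_insert_of_mem hm)]
          module) hz m hmt
      have hne : lam m - lam a ≠ 0 := sub_ne_zero.2 (fun h => by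
        have := hinj (Finset.mem_coe.2 (Finset.mem_insert_of_mem hmt))
          (Finset.mem_coe.2 (Finset.mem_insert_self a t)) h
        exact ha (this ▸ hmt))
      have hsm := Submodule.smul_mem U (lam m - lam a)⁻¹ hcomp
      rwa [smul_smul, inv_mul_cancel₀ hne, one_smul] at hsm
    rcases Finset.mem_insert.1 hk with rfl | hkt
    · have hya : y k = (∑ m ∈ insert k t, y m) - ∑ m ∈ t, y m := by
        rw [Finset.sum_insert ha]; abel
      rw [hya]
      exact sub_mem hsum (Submodule.sum_mem U hyt)
    · exact hyt k hkt

/-- A point where finitely many distinct integral linear functionals take distinct values. -/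
lemma sep_point (s : Finset (Fin n → ℤ)) :
    ∃ t : Fin n → ℂ, Set.InjOn (fun w : Fin n → ℤ => ∑ i, (w i : ℂ) * t i) ↑s := by
  classical
  set P : MvPolynomial (Fin n) ℂ :=
    ∏ q ∈ s.offDiag, (∑ i, C (((q.1 i - q.2 i : ℤ) : ℂ)) * X i) with hP
  have hfac : ∀ q ∈ s.offDiag, (∑ i, C (((q.1 i - q.2 i : ℤ) : ℂ)) * X i) ≠ 0 := by
    intro q hq
    obtain ⟨i0, hi0⟩ : ∃ i0, q.1 i0 ≠ q.2 i0 := by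
      by_contra hc
      push_neg at hc
      exact (Finset.mem_offDiag.1 hq).2.2 (funext hc)
    intro h0
    have hco := congrArg (coeff (Finsupp.single i0 1)) h0
    rw [coeff_sum] at hco
    have hterm : ∀ i ∈ Finset.univ,
        coeff (Finsupp.single i0 1) (C (((q.1 i - q.2 i : ℤ) : ℂ)) * X i)
          = if i = i0 then ((q.1 i - q.2 i : ℤ) : ℂ) else 0 := by
      intro i _
      rw [C_mul_X_eq_monomial, coeff_monomial]
      congr 1
      simp only [eq_iff_iff]
      constructor
      · intro h
        rcases (Finsupp.single_eq_single_iff _ _ _ _).1 h with ⟨h1, _⟩ | ⟨h1, _⟩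
        · exact h1
        · exact absurd h1 one_ne_zero
      · rintro rfl; rfl
    rw [Finset.sum_congr rfl hterm, Finset.sum_ite_eq' Finset.univ i0
      (fun i => ((q.1 i - q.2 i : ℤ) : ℂ)), if_pos (Finset.mem_univ i0)] at hco
    simp only [coeff_zero] at hco
    have : (q.1 i0 - q.2 i0 : ℤ) = 0 := by exact_mod_cast hco
    omega
  have hPne : P ≠ 0 := Finset.prod_ne_zero_iff.2 hfac
  have hex : ∃ t : Fin n → ℂ, eval t P ≠ 0 := by
    by_contra hc
    push_neg at hc
    exact hPne (MvPolynomial.funext (q := 0) (fun x => by rw [hc x, map_zero]))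
  obtain ⟨t, ht⟩ := hex
  refine ⟨t, ?_⟩
  intro w hw w' hw' heq
  by_contra hne
  have hmem : (w, w') ∈ s.offDiag :=
    Finset.mem_offDiag.2 ⟨Finset.mem_coe.1 hw, Finset.mem_coe.1 hw', hne⟩
  have hz : eval t (∑ i, C (((w i - w' i : ℤ) : ℂ)) * X i) = 0 := by
    have hfeq : ∀ i ∈ Finset.univ, ((w i - w' i : ℤ) : ℂ) * t i
        = (w i : ℂ) * t i - (w' i : ℂ) * t i := by
      intro i _
      push_cast
      ring
    rw [map_sum]
    calc (∑ i, eval t (C (((w i - w' i : ℤ) : ℂ)) * X i))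
        = ∑ i, ((w i - w' i : ℤ) : ℂ) * t i := by simp
      _ = (∑ i, (w i : ℂ) * t i) - ∑ i, (w' i : ℂ) * t i := by
          rw [Finset.sum_congr rfl hfeq, Finset.sum_sub_distrib]
      _ = 0 := sub_eq_zero.2 heq
  have hPz : eval t P = 0 := by
    rw [hP, map_prod]
    exact Finset.prod_eq_zero hmem hz
  exact ht hPz

end Aux3
noncomputable section Aux4
open MvPolynomial

variable {n : ℕ} [NeZero n]

/-- The Cartan generators `x_i ∂_i`. -/
def cartGen : Fin n → DiffOp n := fun i => mX i * pd i

lemma cartGen_eq_monop (i : Fin n) :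
    cartGen i = MonOp ((fun x => if x = i then 1 else 0 : Fin n → ℕ), i) := mX_pd i

lemma licart : LinearIndependent ℂ (cartGen : Fin n → DiffOp n) := by
  have h : (cartGen : Fin n → DiffOp n)
      = MonOp ∘ (fun i => ((fun x => if x = i then 1 else 0 : Fin n → ℕ), i)) := by
    funext i
    exact cartGen_eq_monop i
  rw [h]
  exact monop_li.comp _ (fun i j hij => congrArg Prod.snd hij)

lemma Hcart_eq_span : Hcart n = Submodule.span ℂ (Set.range (cartGen : Fin n → DiffOp n)) := rfl

/-- Basis of the Cartan subalgebra. -/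
def bH : Module.Basis (Fin n) ℂ ↥(Hcart n) := Module.Basis.span licart

lemma bH_coe (i : Fin n) : ((bH i : ↥(Hcart n)) : DiffOp n) = cartGen i :=
  congrArg Subtype.val (Module.Basis.span_apply _ _)

lemma cartGen_mem (i : Fin n) : cartGen i ∈ Hcart n :=
  Submodule.subset_span ⟨i, rfl⟩

/-- Integral weight of a monomial operator. -/
def wtZ (p : (Fin n → ℕ) × Fin n) : Fin n → ℤ :=
  fun x => (p.1 x : ℤ) - if x = p.2 then 1 else 0

lemma wtZC (p : (Fin n → ℕ) × Fin n) (i : Fin n) :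
    ((wtZ p i : ℤ) : ℂ) = (p.1 i : ℂ) - if i = p.2 then 1 else 0 := by
  by_cases h : i = p.2 <;> simp [wtZ, h]

lemma good_zero {T : TreeDiagram n} {p : (Fin n → ℕ) × Fin n} (hp : GoodP T p) :
    p.1 p.2 = 0 := by
  by_contra hc
  exact (hp p.2 hc).1 rfl

lemma wtZ_diag {T : TreeDiagram n} {p : (Fin n → ℕ) × Fin n} (hp : GoodP T p) :
    wtZ p p.2 = -1 := by
  rw [wtZ, good_zero hp]
  simp

lemma wtZ_inj_good {T : TreeDiagram n} {p q : (Fin n → ℕ) × Fin n}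
    (hp : GoodP T p) (hq : GoodP T q) (h : wtZ p = wtZ q) : p = q := by
  have h2 : p.2 = q.2 := by
    by_contra hc
    have h1 := congrFun h p.2
    rw [wtZ_diag hp] at h1
    rw [wtZ, if_neg hc] at h1
    omega
  refine Prod.ext (funext fun x => ?_) h2
  have h1 := congrFun h x
  rw [wtZ, wtZ, h2] at h1
  by_cases hx : x = q.2
  · rw [if_pos hx] at h1; omega
  · rw [if_neg hx] at h1; omega

lemma hrepr (h : ↥(Hcart n)) :
    (h : DiffOp n) = ∑ i, (bH.repr h) i • cartGen i := by
  have hs := bH.sum_repr h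
  have hc := congrArg (Subtype.val : ↥(Hcart n) → DiffOp n) hs
  rw [← hc, Submodule.coe_sum]
  exact Finset.sum_congr rfl fun i _ => by
    rw [SetLike.val_smul, bH_coe]

/-- Bracket of a sum of Cartan generators against a monomial operator. -/
lemma adA_mon (t : Fin n → ℂ) (p : (Fin n → ℕ) × Fin n) :
    ⁅(∑ i, t i • cartGen i : DiffOp n), MonOp p⁆
      = (∑ i, ((wtZ p i : ℤ) : ℂ) * t i) • MonOp p := by
  rw [sum_lie']
  rw [Finset.sum_congr rfl (fun i _ => show ⁅t i • cartGen i, MonOp p⁆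
      = (((wtZ p i : ℤ) : ℂ) * t i) • MonOp p from ?_), ← Finset.sum_smul]
  rw [smul_lie'', cartGen_eq_monop]
  have hm : ⁅MonOp ((fun x => if x = i then 1 else 0 : Fin n → ℕ), i), MonOp p⁆
      = (((p.1 i : ℂ)) - if i = p.2 then 1 else 0) • MonOp p := by
    have := adH_mon i p.1 p.2
    rw [mX_pd] at this
    exact this
  rw [hm, smul_smul, wtZC, mul_comm]

/-- Bracket of an element of the Cartan against a monomial operator. -/
lemma adH_root (h : ↥(Hcart n)) (p : (Fin n → ℕ) × Fin n) :
    ⁅(h : DiffOp n), MonOp p⁆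
      = (∑ i, ((wtZ p i : ℤ) : ℂ) * (bH.repr h) i) • MonOp p := by
  conv_lhs => rw [hrepr h]
  have := adA_mon (fun i => (bH.repr h) i) p
  exact this

/-- The root functional attached to a monomial operator. -/
def rootF (p : (Fin n → ℕ) × Fin n) : ↥(Hcart n) →ₗ[ℂ] ℂ :=
  ∑ i, ((wtZ p i : ℤ) : ℂ) • ((bH (n := n)).coord i)

lemma rootF_apply (p : (Fin n → ℕ) × Fin n) (h : ↥(Hcart n)) :
    rootF p h = ∑ i, ((wtZ p i : ℤ) : ℂ) * (bH.repr h) i := by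
  rw [rootF, LinearMap.sum_apply]
  exact Finset.sum_congr rfl fun i _ => by
    rw [LinearMap.smul_apply, Module.Basis.coord_apply, smul_eq_mul]

lemma rootF_basis (p : (Fin n → ℕ) × Fin n) (i : Fin n) :
    rootF p (bH i) = ((wtZ p i : ℤ) : ℂ) := by
  rw [rootF_apply]
  have : ∀ j ∈ Finset.univ, ((wtZ p j : ℤ) : ℂ) * (bH.repr (bH i)) j
      = if j = i then ((wtZ p j : ℤ) : ℂ) else 0 := by
    intro j _
    rw [Module.Basis.repr_self, Finsupp.single_apply]
    by_cases hj : j = i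
    · simp [hj]
    · simp [hj, Ne.symm hj]
  rw [Finset.sum_congr rfl this,
    Finset.sum_ite_eq' Finset.univ i (fun j => ((wtZ p j : ℤ) : ℂ)),
    if_pos (Finset.mem_univ i)]

lemma Hcart_bracket_zero :
    ∀ a ∈ Hcart n, ∀ b ∈ Hcart n, ⁅a, b⁆ = (0 : DiffOp n) := by
  have hgen : ∀ i j : Fin n, ⁅cartGen i, cartGen j⁆ = (0 : DiffOp n) := by
    intro i j
    rw [cartGen_eq_monop j, cartGen]
    rw [adH_mon]
    have : ((if i = j then 1 else 0 : ℕ) : ℂ) - (if i = j then 1 else 0 : ℂ) = 0 := by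
      by_cases h : i = j <;> simp [h]
    rw [this, zero_smul]
  intro a ha
  induction ha using Submodule.span_induction with
  | mem x hx =>
    obtain ⟨i, rfl⟩ := hx
    intro b hb
    induction hb using Submodule.span_induction with
    | mem y hy => obtain ⟨j, rfl⟩ := hy; exact hgen i j
    | zero => simp
    | add y z _ _ h1 h2 => rw [lie_add, h1, h2, add_zero]
    | smul c y _ h1 => rw [lie_smul'', h1, smul_zero]
  | zero => intro b _; simp
  | add x y _ _ h1 h2 => intro b hb; rw [add_lie, h1 b hb, h2 b hb, add_zero]
  | smul c x _ h1 => intro b hb; rw [smul_lie'', h1 b hb, smul_zero]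

lemma adHcart (T : TreeDiagram n) :
    ∀ h ∈ Hcart n, ∀ y ∈ downL0 T, ⁅h, y⁆ ∈ downL0 T := by
  intro h hh
  induction hh using Submodule.span_induction with
  | mem x hx => obtain ⟨i, rfl⟩ := hx; exact adH_downL0 T i
  | zero => intro y _; simp
  | add x y _ _ h1 h2 => intro z hz; rw [add_lie]; exact add_mem (h1 z hz) (h2 z hz)
  | smul c x _ h1 => intro z hz; rw [smul_lie'']; exact Submodule.smul_mem _ _ (h1 z hz)

end Aux4
noncomputable section Aux5
open MvPolynomial

variable {n : ℕ} [NeZero n]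

/-- The index type for the root-vector basis of `downL0`. -/
def IdxT (T : TreeDiagram n) : Type :=
  {p : (Fin n → ℕ) × Fin n // MonOp p ∈ downL0 T ∧ GoodP T p}

lemma span_eq_downL0 (T : TreeDiagram n) :
    Submodule.span ℂ (Set.range (fun k : IdxT T => MonOp k.1))
      = (downL0 T).toSubmodule := by
  apply le_antisymm
  · rw [Submodule.span_le]
    rintro _ ⟨k, rfl⟩
    exact k.2.1
  · intro u hu
    have huWT : u ∈ Submodule.span ℂ
        (Set.range (fun q : {p : (Fin n → ℕ) × Fin n // GoodP T p} => MonOp q.1)) := by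
      have h1 := downL0_le_WT T hu
      rw [WT, WTset] at h1
      have him : (MonOp '' {p : (Fin n → ℕ) × Fin n | GoodP T p})
          = Set.range (fun q : {p : (Fin n → ℕ) × Fin n // GoodP T p} => MonOp q.1) := by
        rw [Set.image_eq_range]
        rfl
      rwa [him] at h1
    obtain ⟨c, hc⟩ := Finsupp.mem_span_range_iff_exists_finsupp.1 huWT
    obtain ⟨t, ht⟩ := sep_point (c.support.image (fun q => wtZ q.1))
    set A : DiffOp n := ∑ i, t i • cartGen i with hA
    have hAinv : ∀ x ∈ (downL0 T).toSubmodule, ⁅A, x⁆ ∈ (downL0 T).toSubmodule := by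
      intro x hx
      rw [hA, sum_lie']
      exact Submodule.sum_mem _ fun i _ => by
        rw [smul_lie'']
        exact Submodule.smul_mem _ _ (adH_downL0 T i x hx)
    have hsum : (∑ q ∈ c.support, c q • MonOp q.1) ∈ (downL0 T).toSubmodule := by
      have : (∑ q ∈ c.support, c q • MonOp q.1) = u := hc
      rw [this]; exact hu
    have hext := extract_weights (downL0 T).toSubmodule A hAinv c.support
      (fun q => c q • MonOp q.1)
      (fun q => ∑ i, ((wtZ q.1 i : ℤ) : ℂ) * t i)
      (fun q hq q' hq' heq => by
        have := ht (Finset.mem_coe.2 (Finset.mem_image_of_mem _ (Finset.mem_coe.1 hq)))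
          (Finset.mem_coe.2 (Finset.mem_image_of_mem _ (Finset.mem_coe.1 hq'))) heq
        exact Subtype.ext (wtZ_inj_good q.2 q'.2 this))
      (fun q hq => by
        show ⁅A, c q • MonOp q.1⁆ = (∑ i, ((wtZ q.1 i : ℤ) : ℂ) * t i) • (c q • MonOp q.1)
        rw [lie_smul'', hA, adA_mon, smul_smul, smul_smul, mul_comm])
      hsum
    have hrw : u = ∑ q ∈ c.support, c q • MonOp q.1 := hc.symm
    rw [hrw]
    refine Submodule.sum_mem _ fun q hq => ?_
    have hcq : c q ≠ 0 := Finsupp.mem_support_iff.1 hq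
    have h1 := hext q hq
    have hm : MonOp q.1 ∈ downL0 T := by
      have h2 := Submodule.smul_mem (downL0 T).toSubmodule (c q)⁻¹ h1
      rwa [smul_smul, inv_mul_cancel₀ hcq, one_smul] at h2
    exact Submodule.smul_mem _ _ (Submodule.subset_span ⟨⟨q.1, hm, q.2⟩, rfl⟩)

end Aux5
noncomputable section

/-- Lemma 3.3. -/
theorem downL1_root_space_decomposition (n : ℕ) [NeZero n] (T : TreeDiagram n) :
    (∀ x ∈ downL1 T, ∀ y ∈ downL0 T, ⁅x, y⁆ ∈ downL0 T) ∧
    ∃ (ι : Type) (v : ι → DiffOp n) (α : ι → (↥(Hcart n) →ₗ[ℂ] ℂ)),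
      LinearIndependent ℂ v ∧
      Submodule.span ℂ (Set.range v) = (downL0 T).toSubmodule ∧
      (∀ k : ι, α k ≠ 0) ∧
      (∀ (k : ι) (h : ↥(Hcart n)), ⁅(h : DiffOp n), v k⁆ = α k h • v k) ∧
      Function.Injective α ∧
      ∀ I : Submodule ℂ (DiffOp n), IsAbelianIdeal (downL1 T) I →
        ∃ s : Set ι, I = Submodule.span ℂ (v '' s) := by
  classical
  constructor
  · -- (1) `downL0` is an ideal of `downL1`
    intro x hx y hy
    obtain ⟨h, hh, u, hu, rfl⟩ := Submodule.mem_sup.1 hx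
    rw [add_lie]
    exact (downL0 T).toSubmodule.add_mem (adHcart T h hh y hy) ((downL0 T).lie_mem hu hy)
  · -- (2),(3): root space decomposition and abelian ideals
    refine ⟨IdxT T, fun k => MonOp k.1, fun k => rootF k.1,
      monop_li.comp _ Subtype.val_injective, span_eq_downL0 T, ?_, ?_, ?_, ?_⟩
    · -- roots are nonzero
      intro k h0
      have h1 := congrArg (fun f : ↥(Hcart n) →ₗ[ℂ] ℂ => f (bH k.1.2)) h0
      simp only [LinearMap.zero_apply] at h1
      rw [rootF_basis, wtZ_diag k.2.2] at h1
      norm_num at h1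
    · -- root vector property
      intro k h
      rw [adH_root, rootF_apply]
    · -- roots are distinct
      intro k k' h0
      have hw : ∀ i, wtZ k.1 i = wtZ k'.1 i := by
        intro i
        have h1 := congrArg (fun f : ↥(Hcart n) →ₗ[ℂ] ℂ => f (bH i)) h0
        simp only [rootF_basis] at h1
        exact_mod_cast h1
      exact Subtype.ext (wtZ_inj_good k.2.2 k'.2.2 (funext hw))
    · -- abelian ideals
      rintro I ⟨hIle, hId, hab⟩
      refine ⟨{k | MonOp k.1 ∈ I}, le_antisymm ?_ ?_⟩
      · -- I ≤ span
        intro x hx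
        have hx1 := hIle hx
        rw [downL1] at hx1
        obtain ⟨h, hh, u, hu, rfl⟩ := Submodule.mem_sup.1 hx1
        have hu' : u ∈ Submodule.span ℂ (Set.range (fun k : IdxT T => MonOp k.1)) := by
          rw [span_eq_downL0]; exact hu
        obtain ⟨c, hc⟩ := Finsupp.mem_span_range_iff_exists_finsupp.1 hu'
        obtain ⟨t, ht⟩ := sep_point (insert 0 (c.support.image (fun q => wtZ q.1)))
        set A : DiffOp n := ∑ i, t i • cartGen i with hA
        have hA_H : A ∈ Hcart n :=
          Submodule.sum_mem _ fun i _ => Submodule.smul_mem _ _ (cartGen_mem i)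
        have hA_L1 : A ∈ downL1 T := Submodule.mem_sup_left hA_H
        have hIinv : ∀ z ∈ I, ⁅A, z⁆ ∈ I := fun z hz => hId A hA_L1 z hz
        have hzf : (∑ i, ((0 : Fin n → ℤ) i : ℂ) * t i) = 0 := by simp
        have heig : ∀ o ∈ insert none (c.support.image some),
            ⁅A, Option.elim o h (fun k => c k • MonOp k.1)⁆
              = Option.elim o 0 (fun k => ∑ i, ((wtZ k.1 i : ℤ) : ℂ) * t i)
                  • Option.elim o h (fun k => c k • MonOp k.1) := by
          rintro (_ | k) _
          · show ⁅A, h⁆ = (0 : ℂ) • h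
            rw [Hcart_bracket_zero A hA_H h hh, zero_smul]
          · show ⁅A, c k • MonOp k.1⁆
              = (∑ i, ((wtZ k.1 i : ℤ) : ℂ) * t i) • (c k • MonOp k.1)
            rw [lie_smul'', hA, adA_mon, smul_smul, smul_smul, mul_comm]
        have hinj : Set.InjOn (fun o : Option (IdxT T) =>
            Option.elim o 0 (fun k => ∑ i, ((wtZ k.1 i : ℤ) : ℂ) * t i))
            ↑(insert none (c.support.image some)) := by
          rintro (_ | k) ho (_ | k') ho' heq
          · rfl
          · exfalso
            have hm' : wtZ k'.1 ∈ insert 0 (c.support.image (fun q => wtZ q.1)) := by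
              refine Finset.mem_insert_of_mem (Finset.mem_image.2 ⟨k', ?_, rfl⟩)
              have := Finset.mem_coe.1 ho'
              rcases Finset.mem_insert.1 this with h' | h'
              · exact absurd h' (by simp)
              · obtain ⟨a, ha, hae⟩ := Finset.mem_image.1 h'
                cases hae; exact ha
            have h0 : (0 : Fin n → ℤ) = wtZ k'.1 :=
              ht (Finset.mem_coe.2 (Finset.mem_insert_self _ _)) (Finset.mem_coe.2 hm')
                (by simpa [hzf] using heq)
            have := congrFun h0 k'.1.2
            rw [wtZ_diag k'.2.2] at this
            simp at this
          · exfalso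
            have hm' : wtZ k.1 ∈ insert 0 (c.support.image (fun q => wtZ q.1)) := by
              refine Finset.mem_insert_of_mem (Finset.mem_image.2 ⟨k, ?_, rfl⟩)
              have := Finset.mem_coe.1 ho
              rcases Finset.mem_insert.1 this with h' | h'
              · exact absurd h' (by simp)
              · obtain ⟨a, ha, hae⟩ := Finset.mem_image.1 h'
                cases hae; exact ha
            have h0 : wtZ k.1 = (0 : Fin n → ℤ) :=
              ht (Finset.mem_coe.2 hm') (Finset.mem_coe.2 (Finset.mem_insert_self _ _))
                (by simpa [hzf] using heq)
            have := congrFun h0 k.1.2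
            rw [wtZ_diag k.2.2] at this
            simp at this
          · have hmk : wtZ k.1 ∈ insert 0 (c.support.image (fun q => wtZ q.1)) := by
              refine Finset.mem_insert_of_mem (Finset.mem_image.2 ⟨k, ?_, rfl⟩)
              have := Finset.mem_coe.1 ho
              rcases Finset.mem_insert.1 this with h' | h'
              · exact absurd h' (by simp)
              · obtain ⟨a, ha, hae⟩ := Finset.mem_image.1 h'
                cases hae; exact ha
            have hmk' : wtZ k'.1 ∈ insert 0 (c.support.image (fun q => wtZ q.1)) := by
              refine Finset.mem_insert_of_mem (Finset.mem_image.2 ⟨k', ?_, rfl⟩)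
              have := Finset.mem_coe.1 ho'
              rcases Finset.mem_insert.1 this with h' | h'
              · exact absurd h' (by simp)
              · obtain ⟨a, ha, hae⟩ := Finset.mem_image.1 h'
                cases hae; exact ha
            have h0 : wtZ k.1 = wtZ k'.1 :=
              ht (Finset.mem_coe.2 hmk) (Finset.mem_coe.2 hmk') heq
            rw [Subtype.ext (wtZ_inj_good k.2.2 k'.2.2 h0)]
        have hsum : (∑ o ∈ insert none (c.support.image some),
            Option.elim o h (fun k => c k • MonOp k.1)) ∈ I := by
          rw [Finset.sum_insert (by simp)]
          have h1 : (∑ o ∈ c.support.image some,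
              Option.elim o h (fun k => c k • MonOp k.1)) = ∑ q ∈ c.support, c q • MonOp q.1 :=
            Finset.sum_image (fun a _ b _ hab => Option.some_injective _ hab)
          rw [h1]
          have h2 : (∑ q ∈ c.support, c q • MonOp q.1) = u := hc
          rw [h2]
          exact hx
        have hext := extract_weights I A hIinv (insert none (c.support.image some))
          (fun o => Option.elim o h (fun k => c k • MonOp k.1))
          (fun o => Option.elim o 0 (fun k => ∑ i, ((wtZ k.1 i : ℤ) : ℂ) * t i))
          hinj heig hsum
        have hmemh : h ∈ I := hext none (Finset.mem_insert_self _ _)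
        have hterms : ∀ k ∈ c.support, c k • MonOp k.1 ∈ I := fun k hk =>
          hext (some k) (Finset.mem_insert_of_mem (Finset.mem_image_of_mem _ hk))
        -- show h = 0
        set d : Fin n → ℂ := fun i => bH.repr ⟨h, hh⟩ i with hd
        have hlam0 : ∀ p : (Fin n → ℕ) × Fin n, MonOp p ∈ downL0 T →
            (∑ i, ((wtZ p i : ℤ) : ℂ) * d i) = 0 := by
          intro p hp
          set lg : ℂ := ∑ i, ((wtZ p i : ℤ) : ℂ) * d i with hlg
          have hbr : ⁅h, MonOp p⁆ = lg • MonOp p := adH_root ⟨h, hh⟩ p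
          have hgL1 : MonOp p ∈ downL1 T := Submodule.mem_sup_right hp
          have h1 : ⁅MonOp p, h⁆ ∈ I := hId _ hgL1 h hmemh
          have h2 : ⁅MonOp p, h⁆ = (-lg) • MonOp p := by
            have hskew : ⁅MonOp p, h⁆ = -⁅h, MonOp p⁆ := by
              rw [Ring.lie_def, Ring.lie_def]; abel
            rw [hskew, hbr]
            module
          have h3 : ⁅h, (-lg) • MonOp p⁆ = 0 := hab h hmemh _ (h2 ▸ h1)
          rw [lie_smul'', hbr, smul_smul] at h3
          rcases smul_eq_zero.1 h3 with h4 | h4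
          · rw [neg_mul] at h4
            exact mul_self_eq_zero.1 (neg_eq_zero.1 h4)
          · exact absurd h4 (monop_ne_zero p)
        have htip : ∀ r, IsTip T r → d r = 0 := by
          intro r hr
          have hmem : MonOp ((fun _ => 0 : Fin n → ℕ), r) ∈ downL0 T := by
            rw [← pd_eq_monop]
            exact LieSubalgebra.subset_lieSpan (Or.inl ⟨r, hr, rfl⟩)
          have h0 := hlam0 _ hmem
          have hterm : ∀ i ∈ Finset.univ,
              ((wtZ ((fun _ => 0 : Fin n → ℕ), r) i : ℤ) : ℂ) * d i
                = if i = r then -d i else 0 := by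
            intro i _
            rw [wtZC]
            by_cases hi : i = r <;> simp [hi]
          rw [Finset.sum_congr rfl hterm,
            Finset.sum_ite_eq' Finset.univ r (fun i => -d i),
            if_pos (Finset.mem_univ r)] at h0
          exact neg_eq_zero.1 h0
        have hedge : ∀ j, j ≠ 0 → d (T.parent j) = (T.weight j : ℂ) * d j := by
          intro j hj
          have hmem : MonOp ((fun x => if x = j then T.weight j else 0 : Fin n → ℕ),
              T.parent j) ∈ downL0 T := by
            rw [← mX_pow_pd]
            exact LieSubalgebra.subset_lieSpan (Or.inr ⟨j, hj, rfl⟩)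
          have h0 := hlam0 _ hmem
          have hterm : ∀ i ∈ Finset.univ,
              ((wtZ ((fun x => if x = j then T.weight j else 0 : Fin n → ℕ),
                T.parent j) i : ℤ) : ℂ) * d i
                = (if i = j then (T.weight j : ℂ) * d i else 0)
                  - (if i = T.parent j then d i else 0) := by
            intro i _
            rw [wtZC]
            by_cases h1 : i = j <;> by_cases h2 : i = T.parent j <;> simp [h1, h2] <;>
              split_ifs <;> ring
          rw [Finset.sum_congr rfl hterm, Finset.sum_sub_distrib,
            Finset.sum_ite_eq' Finset.univ j (fun i => (T.weight j : ℂ) * d i),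
            Finset.sum_ite_eq' Finset.univ (T.parent j) (fun i => d i),
            if_pos (Finset.mem_univ j), if_pos (Finset.mem_univ (T.parent j))] at h0
          exact (sub_eq_zero.1 h0).symm

        have hdzero : ∀ i, d i = 0 := by
          have main : ∀ m : ℕ, ∀ i : Fin n, n - i.val ≤ m → d i = 0 := by
            intro m
            induction m with
            | zero => intro i h0; exact absurd h0 (by have := i.isLt; omega)
            | succ m ihm =>
              intro i _
              by_cases htp : IsTip T i
              · exact htip i htp
              · rw [IsTip] at htp
                push_neg at htp
                obtain ⟨j, hj0, hpj⟩ := htp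
                have hij : i < j := hpj ▸ T.parent_lt j hj0
                have hdj : d j = 0 := ihm j (by
                  have h1 := i.isLt
                  have h2 : i.val < j.val := hij
                  omega)
                rw [← hpj, hedge j hj0, hdj, mul_zero]
          intro i
          exact main n i (by omega)
        have hzero : h = 0 := by
          have h1 : h = ∑ i, d i • cartGen i := hrepr ⟨h, hh⟩
          rw [h1]
          exact Finset.sum_eq_zero fun i _ => by rw [hdzero i, zero_smul]
        rw [hzero, zero_add, ← hc]
        refine Submodule.sum_mem _ fun q hq => ?_
        have hcq : c q ≠ 0 := Finsupp.mem_support_iff.1 hq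
        have hvI : MonOp q.1 ∈ I := by
          have h1 := hterms q hq
          have h2 := Submodule.smul_mem I (c q)⁻¹ h1
          rwa [smul_smul, inv_mul_cancel₀ hcq, one_smul] at h2
        exact Submodule.smul_mem _ _ (Submodule.subset_span ⟨q, hvI, rfl⟩)
      · -- span ≤ I
        rw [Submodule.span_le]
        rintro _ ⟨k, hk, rfl⟩
        exact hk

end
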